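/- If S is a numerical semigroup with concentration 2, multiplicity m, and Frobenius number F(S) > 2m, then n(S) ≥ m/2 + 2, where n(S) is the number of elements of S strictly smaller than F(S). -/
import Mathlib


open Set

/-- A numerical semigroup: contains 0, closed under addition, finite complement. -/
def IsNumSgp (S : Set ℕ) : Prop :=
  0 ∈ S ∧ (∀ a ∈ S, ∀ b ∈ S, a + b ∈ S) ∧ (Sᶜ : Set ℕ).Finite

/-- The multiplicity: least positive element. -/
noncomputable def mult (S : Set ℕ) : ℕ := sInf {n | n ∈ S ∧ n ≠ 0}

/-- next_S(s) = min { x ∈ S | s < x }. -/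
noncomputable def nextS (S : Set ℕ) (s : ℕ) : ℕ := sInf {x | x ∈ S ∧ s < x}

/-- The concentration C(S) = max { next_S(s) - s | s ∈ S \ {0} }. -/
noncomputable def conc (S : Set ℕ) : ℕ :=
  sSup {d | ∃ s ∈ S, s ≠ 0 ∧ d = nextS S s - s}

/-- The Frobenius number: largest gap. -/
noncomputable def frob (S : Set ℕ) : ℕ := sSup (Sᶜ : Set ℕ)

/-- The genus: number of gaps. -/
noncomputable def genus (S : Set ℕ) : ℕ := (Sᶜ : Set ℕ).ncard

/-- x is a minimal generator of S. -/
def IsMinGen (S : Set ℕ) (x : ℕ) : Prop :=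
  x ∈ S ∧ x ≠ 0 ∧ ¬∃ a ∈ S, ∃ b ∈ S, a ≠ 0 ∧ b ≠ 0 ∧ a + b = x

/-- The embedding dimension: number of minimal generators. -/
noncomputable def edim (S : Set ℕ) : ℕ := {x | IsMinGen S x}.ncard

/-- n(S): the number of elements of S smaller than the Frobenius number. -/
noncomputable def nS (S : Set ℕ) : ℕ := {s | s ∈ S ∧ s < frob S}.ncard

/-- The half-line Δ(m) = {0} ∪ {m, m+1, ...}. -/
def Delta (m : ℕ) : Set ℕ := {0} ∪ {n | m ≤ n}

def IsHalfLine (S : Set ℕ) : Prop := ∃ m, S = Delta m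

/-- An irreducible numerical semigroup. -/
def Irred (S : Set ℕ) : Prop :=
  ¬∃ T₁ T₂ : Set ℕ, IsNumSgp T₁ ∧ IsNumSgp T₂ ∧ S ⊂ T₁ ∧ S ⊂ T₂ ∧ S = T₁ ∩ T₂

theorem stmt13 (S : Set ℕ) (m : ℕ) (hS : IsNumSgp S) (hC : conc S = 2)
    (hm : mult S = m) (hF : 2 * m < frob S) :
    (m : ℚ) / 2 + 2 ≤ (nS S : ℚ) := by
  obtain ⟨h0, hadd, hfin⟩ := hS
  have hSinf : S.Infinite := by
    have := hfin.infinite_compl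
    simpa using this
  have hne : {n | n ∈ S ∧ n ≠ 0}.Nonempty := by
    obtain ⟨n, hn, hn0⟩ := (hSinf.diff (Set.finite_singleton 0)).nonempty
    exact ⟨n, hn, by simpa using hn0⟩
  have hmS : m ∈ S ∧ m ≠ 0 := hm ▸ Nat.sInf_mem hne
  have hm1 : 1 ≤ m := Nat.one_le_iff_ne_zero.mpr hmS.2
  have hcne : (Sᶜ : Set ℕ).Nonempty := by
    by_contra h
    rw [Set.not_nonempty_iff_eq_empty] at h
    have : frob S = 0 := by rw [frob, h]; simp
    omega
  have hFmem : frob S ∈ (Sᶜ : Set ℕ) := by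
    rw [frob]; exact Nat.sSup_mem hcne hfin.bddAbove
  have hFnot : frob S ∉ S := hFmem
  have htop : ∀ x, frob S < x → x ∈ S := by
    intro x hx
    by_contra hxS
    have : x ≤ frob S := le_csSup hfin.bddAbove hxS
    omega
  have hnext : ∀ s ∈ S, s ≠ 0 → nextS S s ∈ S ∧ s < nextS S s ∧ nextS S s ≤ s + 2 := by
    intro s hs hs0
    have hne2 : {x | x ∈ S ∧ s < x}.Nonempty :=
      ⟨frob S + s + 1, htop _ (by omega), by omega⟩
    have hmem := Nat.sInf_mem hne2
    refine ⟨hmem.1, hmem.2, ?_⟩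
    have hbdd : BddAbove {d | ∃ t ∈ S, t ≠ 0 ∧ d = nextS S t - t} := by
      refine ⟨frob S + 2, ?_⟩
      rintro d ⟨t, ht, ht0, rfl⟩
      have h1 : nextS S t ≤ max t (frob S) + 1 :=
        Nat.sInf_le ⟨htop _ (by omega), by omega⟩
      rcases max_choice t (frob S) with h | h <;> omega
    have hd : nextS S s - s ∈ {d | ∃ t ∈ S, t ≠ 0 ∧ d = nextS S t - t} := ⟨s, hs, hs0, rfl⟩
    have hle2 : nextS S s - s ≤ 2 := by
      have := le_csSup hbdd hd
      rwa [show sSup {d | ∃ t ∈ S, t ≠ 0 ∧ d = nextS S t - t} = 2 from hC] at this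
    omega
  have hpair : ∀ x, m ≤ x → x ∈ S ∨ x + 1 ∈ S := by
    intro x hx
    induction x, hx using Nat.le_induction with
    | base => exact Or.inl hmS.1
    | succ x hx ih =>
      by_contra h
      push_neg at h
      have hxS : x ∈ S := by
        rcases ih with h1 | h1
        · exact h1
        · exact absurd h1 h.1
      obtain ⟨hn1, hn2, hn3⟩ := hnext x hxS (by omega)
      have : nextS S x = x + 1 ∨ nextS S x = x + 2 := by omega
      rcases this with h' | h' <;> rw [h'] at hn1
      · exact h.1 hn1
      · exact h.2 hn1
  set k := (m + 1) / 2 with hk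
  have hchoice : ∀ i, i < k → ∃ x, x ∈ S ∧ m + 1 + 2*i ≤ x ∧ x ≤ m + 2 + 2*i := by
    intro i hi
    rcases hpair (m+1+2*i) (by omega) with h | h
    · exact ⟨_, h, le_refl _, by omega⟩
    · exact ⟨_, h, by omega, by omega⟩
  choose! c hc1 hc2 hc3 using hchoice
  set F0 : Finset ℕ := insert 0 (insert m ((Finset.range k).image c)) with hF0
  have hclt : ∀ i, i < k → c i < frob S := by
    intro i hi
    have h1 := hc1 i hi
    have h2 := hc3 i hi
    have h3 : c i ≠ frob S := fun h => hFnot (h ▸ h1)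
    have h4 : 2 * i ≤ 2 * (k - 1) := by omega
    omega
  have hsub : (F0 : Set ℕ) ⊆ {s | s ∈ S ∧ s < frob S} := by
    intro x hx
    simp only [hF0, Finset.coe_insert, Set.mem_insert_iff, Finset.coe_image,
      Set.mem_image, Finset.mem_coe, Finset.mem_range] at hx
    rcases hx with rfl | rfl | ⟨i, hi, rfl⟩
    · exact ⟨h0, by omega⟩
    · exact ⟨hmS.1, by omega⟩
    · exact ⟨hc1 i hi, hclt i hi⟩
  have hcard : k + 2 ≤ F0.card := by
    have hinj : Set.InjOn c (Finset.range k) := by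
      intro i hi j hj hij
      simp only [Finset.coe_range, Set.mem_Iio] at hi hj
      by_contra hne'
      have h1 := hc2 i hi
      have h2 := hc3 i hi
      have h3 := hc2 j hj
      have h4 := hc3 j hj
      omega
    have himg : ((Finset.range k).image c).card = k := by
      rw [Finset.card_image_of_injOn hinj, Finset.card_range]
    have hm0 : m ∉ (Finset.range k).image c := by
      simp only [Finset.mem_image, Finset.mem_range]
      rintro ⟨i, hi, hci⟩
      have := hc2 i hi
      omega
    have h00 : (0:ℕ) ∉ insert m ((Finset.range k).image c) := by
      simp only [Finset.mem_insert, Finset.mem_image, Finset.mem_range]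
      rintro (h | ⟨i, hi, hci⟩)
      · omega
      · have := hc2 i hi; omega
    rw [hF0, Finset.card_insert_of_notMem h00, Finset.card_insert_of_notMem hm0, himg]
  have hfinT : ({s | s ∈ S ∧ s < frob S} : Set ℕ).Finite :=
    (Set.finite_Iio (frob S)).subset (fun x hx => hx.2)
  have hnS : k + 2 ≤ nS S := by
    have h := Set.ncard_le_ncard hsub hfinT
    rw [Set.ncard_coe_finset] at h
    exact le_trans hcard h
  have h2k : m ≤ 2 * k := by omega
  have : (m : ℚ) + 4 ≤ 2 * (nS S : ℚ) := by
    have : m + 4 ≤ 2 * nS S := by omega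
    exact_mod_cast this
  linarith
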